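/- Let U be a finite type of Boolean variables, x ∈ U, and let e : (U → Bool) → Bool be an expression on input states. Consider formulas over U ⊕ U (unprimed input copy and primed output copy). Let φ be the formula with (σ, σ') a model iff σ' x = e σ and σ' y = σ y for all y ≠ x, and let w assign weight 1 to every literal. Then for all states σ, σ' : U → Bool: WMC(φ ∧ [σ], w) = 1, and WMC(φ ∧ [σ] ∧ [σ'], w) = 1 if σ' = σ[x ↦ e σ] and = 0 otherwise. (Correctness of the compilation of the assignment statement x := e.) -/

import Mathlib

open Classical in
/-- The weighted model count of a formula `φ` over a finite type `V` of Boolean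
variables, with weight function `w`. -/
noncomputable def WMC {V : Type} [Fintype V] (φ : (V → Bool) → Prop) (w : V → Bool → ℝ) : ℝ :=
  ∑ ω : V → Bool, if φ ω then ∏ v, w v (ω v) else 0

open Classical in
theorem wmc_key {V : Type} [Fintype V] (φ : (V → Bool) → Prop) (ω₀ : V → Bool)
    (h : ∀ ω, φ ω ↔ ω = ω₀) :
    WMC φ (fun _ _ => (1 : ℝ)) = 1 := by
  unfold WMC
  rw [Finset.sum_eq_single ω₀]
  · simp [h]
  · intro b _ hb
    simp [h, hb]
  · simp

open Classical in
/-- Correctness of the compilation of the assignment statement `x := e`. -/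
theorem wmc_assign_correct {U : Type} [Fintype U] [DecidableEq U]
    (x : U) (e : (U → Bool) → Bool) (σ σ' : U → Bool) :
    -- the compiled formula: σ' x = e σ and σ' agrees with σ off x
    let φ : (U ⊕ U → Bool) → Prop := fun ω =>
      ω (Sum.inr x) = e (fun u => ω (Sum.inl u))
        ∧ ∀ y : U, y ≠ x → ω (Sum.inr y) = ω (Sum.inl y)
    WMC (fun ω => φ ω ∧ (fun u => ω (Sum.inl u)) = σ) (fun _ _ => (1 : ℝ)) = 1
    ∧ WMC (fun ω => φ ω ∧ (fun u => ω (Sum.inl u)) = σ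
            ∧ (fun u => ω (Sum.inr u)) = σ') (fun _ _ => (1 : ℝ))
        = if σ' = Function.update σ x (e σ) then 1 else 0 := by
  intro φ
  set ω₀ : U ⊕ U → Bool := Sum.elim σ (Function.update σ x (e σ)) with hω₀
  have key : ∀ ω : U ⊕ U → Bool,
      (φ ω ∧ (fun u => ω (Sum.inl u)) = σ) ↔ ω = ω₀ := by
    intro ω
    constructor
    · rintro ⟨⟨h1, h2⟩, h3⟩
      have hσ : ∀ u, ω (Sum.inl u) = σ u := fun u => congrFun h3 u
      funext s
      cases s with
      | inl u => simp only [hω₀, Sum.elim_inl]; exact hσ u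
      | inr u =>
        by_cases hu : u = x
        · subst hu
          simp only [hω₀, Sum.elim_inr, Function.update_self]
          rw [h1, h3]
        · simp only [hω₀, Sum.elim_inr, Function.update_of_ne hu]
          rw [h2 u hu, hσ u]
    · rintro rfl
      refine ⟨⟨?_, ?_⟩, ?_⟩
      · simp only [hω₀, Sum.elim_inl, Sum.elim_inr, Function.update_self]
      · intro y hy; simp only [hω₀, Sum.elim_inl, Sum.elim_inr, Function.update_of_ne hy]
      · funext u; simp only [hω₀, Sum.elim_inl]
  constructor
  · exact wmc_key _ ω₀ key
  · by_cases hσ' : σ' = Function.update σ x (e σ)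
    · simp only [hσ', if_pos rfl]
      apply wmc_key _ ω₀
      intro ω
      rw [← key ω]
      constructor
      · rintro ⟨h1, h2, _⟩; exact ⟨h1, h2⟩
      · rintro ⟨h1, h2⟩
        refine ⟨h1, h2, ?_⟩
        have := (key ω).mp ⟨h1, h2⟩
        subst this
        funext u; simp only [hω₀, Sum.elim_inr, hσ']
    · rw [if_neg hσ']
      unfold WMC
      apply Finset.sum_eq_zero
      intro ω _
      rw [if_neg]
      rintro ⟨h1, h2, h3⟩
      have := (key ω).mp ⟨h1, h2⟩
      subst this
      apply hσ'
      rw [← h3]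
      funext u; simp only [hω₀, Sum.elim_inr]
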